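/- arXiv:2408.05030 — 3 statements merged into one kernel-verified Lean document; each statement's English description precedes it below -/
import Mathlib

section
/- Let a > 0 be such that ln(1-x) ≥ -a x for all x in [0, M] where M = (√2/√π) ∫_{1/(2T)}^∞ e^{-u²/2} du < 1 for some T > 0. Then for every t ∈ (0, T], ∑_{k=0}^∞ ln(1 - (√2/√(πt)) ∫_{k+1/2}^∞ e^{-u²/(2t)} du) ≥ -(10√(2T) a/√π) e^{-1/(8t)}. -/
open Real MeasureTheory Set

noncomputable def Gt (c : ℝ) : ℝ := ∫ v in Set.Ioi c, Real.exp (-v ^ 2 / 2)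

lemma gauss_fun_eq : (fun v : ℝ => Real.exp (-v ^ 2 / 2)) = fun v => Real.exp (-(1/2) * v ^ 2) := by
  funext v; ring_nf

lemma gauss_integrable : Integrable (fun v : ℝ => Real.exp (-v ^ 2 / 2)) := by
  rw [gauss_fun_eq]; exact integrable_exp_neg_mul_sq (by norm_num)

lemma Gt_nonneg (c : ℝ) : 0 ≤ Gt c :=
  setIntegral_nonneg measurableSet_Ioi (fun x _ => (Real.exp_pos _).le)

lemma Gt_pos (c : ℝ) : 0 < Gt c := by
  rw [Gt, setIntegral_pos_iff_support_of_nonneg_ae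
    (Filter.Eventually.of_forall fun x => (Real.exp_pos _).le) gauss_integrable.integrableOn]
  have h : Function.support (fun v : ℝ => Real.exp (-v ^ 2 / 2)) = Set.univ := by
    ext x; simp [(Real.exp_pos _).ne']
  rw [h, Set.univ_inter, Real.volume_Ioi]
  norm_num

lemma Gt_mono {c d : ℝ} (h : c ≤ d) : Gt d ≤ Gt c :=
  setIntegral_mono_set gauss_integrable.integrableOn
    (Filter.Eventually.of_forall fun x => (Real.exp_pos _).le)
    (HasSubset.Subset.eventuallyLE (Set.Ioi_subset_Ioi h))

lemma id_gauss_integrable : Integrable (fun v : ℝ => v * Real.exp (-v ^ 2 / 2)) := by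
  have h := integrable_mul_exp_neg_mul_sq (b := 1/2) (by norm_num)
  have e : (fun v : ℝ => v * Real.exp (-v ^ 2 / 2)) = fun v : ℝ => v * Real.exp (-(1/2) * v ^ 2) := by
    funext v; ring_nf
  rw [e]; exact h

lemma integral_id_gauss (c : ℝ) :
    ∫ v in Set.Ioi c, v * Real.exp (-v ^ 2 / 2) = Real.exp (-c ^ 2 / 2) := by
  have hderiv : ∀ x ∈ Set.Ici c, HasDerivAt (fun v : ℝ => -Real.exp (-v ^ 2 / 2))
      (x * Real.exp (-x ^ 2 / 2)) x := by
    intro x _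
    have h1 : HasDerivAt (fun v : ℝ => -v ^ 2 / 2) (-x) x := by
      have := ((hasDerivAt_pow 2 x).neg).div_const 2
      exact this.congr_deriv (by norm_num; ring)
    have h2 := (h1.exp).neg
    exact h2.congr_deriv (by ring)
  have hlim : Filter.Tendsto (fun v : ℝ => -Real.exp (-v ^ 2 / 2)) Filter.atTop (nhds 0) := by
    have h3 : Filter.Tendsto (fun v : ℝ => -v ^ 2 / 2) Filter.atTop Filter.atBot := by
      have h4 : Filter.Tendsto (fun v : ℝ => v ^ 2) Filter.atTop Filter.atTop :=
        Filter.tendsto_pow_atTop (by norm_num)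
      have h5 := h4.atTop_mul_const_of_neg (r := -(1/2 : ℝ)) (by norm_num)
      convert h5 using 2 with v
      ring
    have := (Real.tendsto_exp_atBot.comp h3).neg
    simpa using this
  have := integral_Ioi_of_hasDerivAt_of_tendsto' hderiv id_gauss_integrable.integrableOn hlim
  simpa using this

lemma subst_lemma {t : ℝ} (ht : 0 < t) (b : ℝ) :
    ∫ u in Set.Ioi b, Real.exp (-u ^ 2 / (2 * t)) = Real.sqrt t * Gt (b / Real.sqrt t) := by
  have hs : 0 < Real.sqrt t := Real.sqrt_pos.2 ht
  have key := integral_comp_mul_left_Ioi (fun u => Real.exp (-u ^ 2 / (2 * t)))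
    (b / Real.sqrt t) hs
  rw [mul_div_cancel₀ _ hs.ne'] at key
  have e : ∀ x : ℝ, Real.exp (-(Real.sqrt t * x) ^ 2 / (2 * t)) = Real.exp (-x ^ 2 / 2) := by
    intro x
    congr 1
    rw [mul_pow, Real.sq_sqrt ht.le]
    field_simp
  simp only [e, smul_eq_mul] at key
  rw [Gt, key]
  field_simp

lemma sum_bound {t : ℝ} (ht : 0 < t) (n : ℕ) :
    ∑ k ∈ Finset.range n, Gt (((k : ℝ) + 1/2) / Real.sqrt t) ≤
      2 * Real.sqrt t * Real.exp (-1 / (8 * t)) := by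
  have hs : 0 < Real.sqrt t := Real.sqrt_pos.2 ht
  set s := Real.sqrt t with hsdef
  set c₀ : ℝ := (1/2) / s with hc0
  set f : ℝ → ℝ := fun v => Real.exp (-v ^ 2 / 2) with hf
  have hck : ∀ k : ℕ, c₀ ≤ ((k : ℝ) + 1/2) / s := by
    intro k
    rw [hc0]
    gcongr
    linarith [Nat.cast_nonneg (α := ℝ) k]

  have hstep1 : ∀ k : ℕ, Gt (((k : ℝ) + 1/2) / s)
      = ∫ v in Set.Ioi c₀, (Set.Ioi (((k : ℝ) + 1/2) / s)).indicator f v := by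
    intro k
    rw [setIntegral_indicator measurableSet_Ioi, Set.Ioi_inter_Ioi,
      max_eq_right (hck k)]
    rfl
  have hindint : ∀ k : ℕ, IntegrableOn
      ((Set.Ioi (((k : ℝ) + 1/2) / s)).indicator f) (Set.Ioi c₀) := by
    intro k
    exact (gauss_integrable.integrableOn.indicator measurableSet_Ioi)
  calc ∑ k ∈ Finset.range n, Gt (((k : ℝ) + 1/2) / s)
      = ∫ v in Set.Ioi c₀, ∑ k ∈ Finset.range n,
          (Set.Ioi (((k : ℝ) + 1/2) / s)).indicator f v := by
        rw [integral_finset_sum _ (fun k _ => hindint k)]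
        exact Finset.sum_congr rfl fun k _ => hstep1 k
    _ ≤ ∫ v in Set.Ioi c₀, 2 * s * (v * f v) := by
        apply setIntegral_mono_on
          (integrable_finset_sum _ (fun k _ => hindint k))
          ((id_gauss_integrable.integrableOn).const_mul (2 * s))
          measurableSet_Ioi
        intro v hv
        have hv' : c₀ < v := hv
        have hsv : 1/2 < s * v := by
          rw [hc0, div_lt_iff₀ hs] at hv'
          linarith [hv']
        have hfv : 0 ≤ f v := (Real.exp_pos _).le
        set m : ℕ := ⌈s * v - 1/2⌉₊ with hm
        have hterm : ∀ k ∈ Finset.range n,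
            (Set.Ioi (((k : ℝ) + 1/2) / s)).indicator f v
              ≤ if k ∈ Finset.range m then f v else 0 := by
          intro k _
          by_cases hkv : v ∈ Set.Ioi (((k : ℝ) + 1/2) / s)
          · rw [Set.indicator_of_mem hkv]
            have : (k : ℝ) < s * v - 1/2 := by
              simp only [Set.mem_Ioi, div_lt_iff₀ hs] at hkv
              linarith [hkv]
            have hkm : k ∈ Finset.range m := Finset.mem_range.2 (Nat.lt_ceil.2 this)
            rw [if_pos hkm]
          · rw [Set.indicator_of_notMem hkv]
            split <;> simp [hfv]
        calc ∑ k ∈ Finset.range n, (Set.Ioi (((k : ℝ) + 1/2) / s)).indicator f v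
            ≤ ∑ k ∈ Finset.range n, if k ∈ Finset.range m then f v else 0 :=
              Finset.sum_le_sum hterm
          _ = ∑ k ∈ Finset.range n ∩ Finset.range m, f v := Finset.sum_ite_mem _ _ _
          _ = (Finset.range n ∩ Finset.range m).card * f v := by
              rw [Finset.sum_const, nsmul_eq_mul]
          _ ≤ (m : ℝ) * f v := by
              apply mul_le_mul_of_nonneg_right _ hfv
              have := Finset.card_le_card (Finset.inter_subset_right
                (s₁ := Finset.range n) (s₂ := Finset.range m))
              simpa using Nat.cast_le.2 (this.trans_eq (Finset.card_range m))
          _ ≤ 2 * s * (v * f v) := by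
              have h1 : (m : ℝ) < s * v - 1/2 + 1 :=
                Nat.ceil_lt_add_one (by linarith)
              nlinarith [hfv]
    _ = 2 * s * Real.exp (-1 / (8 * t)) := by
        rw [MeasureTheory.integral_const_mul, integral_id_gauss]
        congr 1
        rw [hc0, div_pow, hsdef, Real.sq_sqrt ht.le]
        field_simp
        ring

lemma Gt_zero : Gt 0 = Real.sqrt (2 * Real.pi) / 2 := by
  have h := integral_gaussian_Ioi (1/2)
  rw [Gt, gauss_fun_eq]
  rw [h]
  congr 2
  rw [div_div_eq_mul_div, div_one]
  ring

lemma lower_piece : (23 : ℝ)/48 ≤ ∫ v in Set.Ioc (0:ℝ) (1/2), Real.exp (-v ^ 2 / 2) := by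
  rw [← intervalIntegral.integral_of_le (by norm_num : (0:ℝ) ≤ 1/2)]
  have hcomp : ∫ x in (0:ℝ)..(1/2), (1 - x ^ 2 / 2) ≤
      ∫ x in (0:ℝ)..(1/2), Real.exp (-x ^ 2 / 2) := by
    apply intervalIntegral.integral_mono_on (by norm_num)
    · apply IntervalIntegrable.sub intervalIntegrable_const
      exact (intervalIntegral.intervalIntegrable_pow 2).div_const 2
    · exact (Continuous.intervalIntegrable (by continuity) _ _)
    · intro x _
      have := Real.add_one_le_exp (-x ^ 2 / 2)
      linarith
  have hval : ∫ x in (0:ℝ)..(1/2), (1 - x ^ 2 / 2) = 23/48 := by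
    rw [intervalIntegral.integral_sub intervalIntegrable_const
      ((intervalIntegral.intervalIntegrable_pow 2).div_const 2),
      intervalIntegral.integral_div, integral_pow]
    simp
    norm_num
  linarith

lemma Gt_split : Gt 0 = (∫ v in Set.Ioc (0:ℝ) (1/2), Real.exp (-v ^ 2 / 2)) + Gt (1/2) := by
  rw [Gt, Gt, ← setIntegral_union (Set.Ioc_disjoint_Ioi le_rfl) measurableSet_Ioi
    gauss_integrable.integrableOn gauss_integrable.integrableOn,
    Set.Ioc_union_Ioi_eq_Ioi (by norm_num : (0:ℝ) ≤ 1/2)]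

lemma numeric_bound : Real.sqrt 2 / Real.sqrt Real.pi * Gt (1/2) ≤ 4/5 := by
  have hpi : 0 < Real.pi := Real.pi_pos
  have hsp : 0 < Real.sqrt Real.pi := Real.sqrt_pos.2 hpi
  have h2 : (1:ℝ) ≤ Real.sqrt 2 := by
    rw [show (1:ℝ) = Real.sqrt 1 by simp]
    exact Real.sqrt_le_sqrt (by norm_num)
  have hsple : Real.sqrt Real.pi ≤ 2 := by
    rw [show (2:ℝ) = Real.sqrt 4 by rw [show (4:ℝ) = 2^2 by norm_num, Real.sqrt_sq]; norm_num]
    exact Real.sqrt_le_sqrt (by linarith [Real.pi_le_four])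
  have hG : Gt (1/2) ≤ Real.sqrt (2 * Real.pi) / 2 - 23/48 := by
    have h1 := Gt_split
    have h2 := lower_piece
    have h3 := Gt_zero
    linarith
  have hKnn : (0:ℝ) ≤ Real.sqrt 2 / Real.sqrt Real.pi := by positivity
  have step1 : Real.sqrt 2 / Real.sqrt Real.pi * Gt (1/2) ≤
      Real.sqrt 2 / Real.sqrt Real.pi * (Real.sqrt (2 * Real.pi) / 2 - 23/48) :=
    mul_le_mul_of_nonneg_left hG hKnn
  have hsplit : Real.sqrt (2 * Real.pi) = Real.sqrt 2 * Real.sqrt Real.pi :=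
    Real.sqrt_mul (by norm_num) _
  have hss : Real.sqrt 2 * Real.sqrt 2 = 2 := Real.mul_self_sqrt (by norm_num)
  have hK : Real.sqrt 2 / Real.sqrt Real.pi * Real.sqrt Real.pi = Real.sqrt 2 :=
    div_mul_cancel₀ _ hsp.ne'
  have key : Real.sqrt 2 / Real.sqrt Real.pi * (Real.sqrt (2 * Real.pi) / 2 - 23/48) =
      1 - 23/48 * (Real.sqrt 2 / Real.sqrt Real.pi) := by
    rw [hsplit]
    linear_combination (Real.sqrt 2 / 2) * hK + (1/2) * hss
  have hKlb : (48:ℝ)/115 ≤ Real.sqrt 2 / Real.sqrt Real.pi := by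
    rw [le_div_iff₀ hsp]
    nlinarith
  linarith
theorem stmt3 (T a : ℝ) (hT : 0 < T) (ha : 0 < a)
    (hM : Real.sqrt 2 / Real.sqrt Real.pi *
        ∫ u in Set.Ioi (1 / (2 * T)), Real.exp (-u ^ 2 / 2) < 1)
    (hlog : ∀ x ∈ Set.Icc (0 : ℝ)
        (Real.sqrt 2 / Real.sqrt Real.pi *
          ∫ u in Set.Ioi (1 / (2 * T)), Real.exp (-u ^ 2 / 2)),
        Real.log (1 - x) ≥ -a * x) :
    ∀ t ∈ Set.Ioc (0 : ℝ) T,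
      ∑' k : ℕ, Real.log (1 - Real.sqrt 2 / Real.sqrt (Real.pi * t) *
          ∫ u in Set.Ioi ((k : ℝ) + 1 / 2), Real.exp (-u ^ 2 / (2 * t))) ≥
        -(10 * Real.sqrt (2 * T) * a / Real.sqrt Real.pi) * Real.exp (-1 / (8 * t)) := by
  intro t htmem
  obtain ⟨ht, htT⟩ := htmem
  have hs : 0 < Real.sqrt t := Real.sqrt_pos.2 ht
  have hsp : 0 < Real.sqrt Real.pi := Real.sqrt_pos.2 Real.pi_pos
  set K : ℝ := Real.sqrt 2 / Real.sqrt Real.pi with hKdef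
  have hK0 : 0 ≤ K := by positivity
  have hGdef : (∫ u in Set.Ioi (1 / (2 * T)), Real.exp (-u ^ 2 / 2)) = Gt (1/(2*T)) := rfl
  rw [hGdef] at hM hlog
  set c : ℕ → ℝ := fun k => ((k : ℝ) + 1/2) / Real.sqrt t with hc
  set X : ℕ → ℝ := fun k => K * Gt (c k) with hX
  have hre : ∀ k : ℕ, Real.sqrt 2 / Real.sqrt (Real.pi * t) *
      (∫ u in Set.Ioi ((k : ℝ) + 1 / 2), Real.exp (-u ^ 2 / (2 * t))) = X k := by
    intro k
    rw [subst_lemma ht, Real.sqrt_mul Real.pi_pos.le]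
    rw [hX, hKdef, hc]
    field_simp
  have hXnn : ∀ k, 0 ≤ X k := fun k => mul_nonneg hK0 (Gt_nonneg _)
  have hGsum : Summable fun k : ℕ => Gt (c k) :=
    summable_of_sum_range_le (fun k => Gt_nonneg _) (fun n => sum_bound ht n)
  have hGtsum : ∑' k : ℕ, Gt (c k) ≤ 2 * Real.sqrt t * Real.exp (-1/(8*t)) :=
    Real.tsum_le_of_sum_range_le (fun k => Gt_nonneg _) (fun n => sum_bound ht n)
  have hXsum : Summable X := hGsum.mul_left K
  -- case facts
  have hcase : ∀ k : ℕ, X k ≤ K * Gt (1/(2*T)) ∨ X k ≤ 4/5 := by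
    intro k
    rcases le_or_gt 1 T with h1T | h1T
    · left
      apply mul_le_mul_of_nonneg_left _ hK0
      apply Gt_mono
      have hT2 : Real.sqrt t ≤ T := le_trans (Real.sqrt_le_sqrt htT)
        ((Real.sqrt_le_left hT.le).2 (by nlinarith))
      rw [hc, div_le_div_iff₀ (by positivity) hs]
      have hk0 : (0:ℝ) ≤ (k:ℝ) := Nat.cast_nonneg k
      nlinarith
    · right
      have hst1 : Real.sqrt t ≤ 1 := by
        rw [show (1:ℝ) = Real.sqrt 1 by simp]
        exact Real.sqrt_le_sqrt (by linarith)
      have hsub2 : (1:ℝ)/2 ≤ c k := by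
        rw [hc, le_div_iff₀ hs]
        have hk0 : (0:ℝ) ≤ (k:ℝ) := Nat.cast_nonneg k
        nlinarith
      calc X k ≤ K * Gt (1/2) := mul_le_mul_of_nonneg_left (Gt_mono hsub2) hK0
        _ ≤ 4/5 := numeric_bound
  have ha1 : 1 ≤ a := by
    have hM0 : 0 < K * Gt (1/(2*T)) := mul_pos (by positivity) (Gt_pos _)
    have hl := hlog (K * Gt (1/(2*T))) ⟨hM0.le, le_rfl⟩
    have hub := Real.log_le_sub_one_of_pos (show (0:ℝ) < 1 - K * Gt (1/(2*T)) by linarith)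
    nlinarith [hl, hub]
  have h5 : ∀ k, -Real.log (1 - X k) ≤ 5 * a * X k := by
    intro k
    rcases hcase k with hXM | hX45
    · have hl := hlog (X k) ⟨hXnn k, hXM⟩
      nlinarith [hl, mul_nonneg ha.le (hXnn k)]
    · have hYpos : (0:ℝ) < 1 - X k := by linarith
      have F1 : Real.log ((1 - X k)⁻¹) ≤ (1 - X k)⁻¹ - 1 :=
        Real.log_le_sub_one_of_pos (inv_pos.2 hYpos)
      rw [Real.log_inv] at F1
      have F2 : (1 - X k)⁻¹ * (1 - X k) = 1 := inv_mul_cancel₀ hYpos.ne'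
      have F3 : (1 - X k)⁻¹ ≤ 5 := by
        rw [inv_le_comm₀ (by linarith) (by norm_num)]
        linarith
      have F6 : 0 ≤ (5 - (1 - X k)⁻¹) * X k :=
        mul_nonneg (by linarith) (hXnn k)
      have F7 : 0 ≤ (a - 1) * X k := mul_nonneg (by linarith) (hXnn k)
      nlinarith [F1, F2, F6, F7]
  have hX1 : ∀ k, X k < 1 := by
    intro k
    rcases hcase k with h | h
    · linarith
    · linarith
  have hnn : ∀ k, 0 ≤ -Real.log (1 - X k) := by
    intro k
    have hl0 : Real.log (1 - X k) ≤ 0 :=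
      Real.log_nonpos (by linarith [hX1 k]) (by linarith [hXnn k])
    linarith
  have Slog : Summable (fun k => -Real.log (1 - X k)) :=
    Summable.of_nonneg_of_le hnn h5 (hXsum.mul_left (5 * a))
  have hbig : ∑' k, -Real.log (1 - X k) ≤
      5 * a * (K * (2 * Real.sqrt t * Real.exp (-1/(8*t)))) := by
    calc ∑' k, -Real.log (1 - X k) ≤ ∑' k, 5 * a * X k :=
          Summable.tsum_le_tsum h5 Slog (hXsum.mul_left (5 * a))
      _ = 5 * a * ∑' k, X k := tsum_mul_left
      _ = 5 * a * (K * ∑' k, Gt (c k)) := by rw [hX, tsum_mul_left]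
      _ ≤ 5 * a * (K * (2 * Real.sqrt t * Real.exp (-1/(8*t)))) := by
          gcongr
  have hrw : (∑' k : ℕ, Real.log (1 - Real.sqrt 2 / Real.sqrt (Real.pi * t) *
      ∫ u in Set.Ioi ((k : ℝ) + 1 / 2), Real.exp (-u ^ 2 / (2 * t)))) =
      ∑' k, Real.log (1 - X k) := tsum_congr (fun k => by rw [hre k])
  rw [hrw, ge_iff_le]
  have hneg : ∑' k, Real.log (1 - X k) = -∑' k, -Real.log (1 - X k) := by
    rw [← tsum_neg]
    simp
  rw [hneg]
  have hKt : K * Real.sqrt t ≤ Real.sqrt (2*T) / Real.sqrt Real.pi := by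
    rw [hKdef, div_mul_eq_mul_div]
    gcongr
    rw [← Real.sqrt_mul (by norm_num) t]
    exact Real.sqrt_le_sqrt (by linarith)
  have hexp : (0:ℝ) < Real.exp (-1/(8*t)) := Real.exp_pos _
  have hfin : 5 * a * (K * (2 * Real.sqrt t * Real.exp (-1/(8*t)))) ≤
      10 * Real.sqrt (2*T) * a / Real.sqrt Real.pi * Real.exp (-1/(8*t)) := by
    have h10 : 10 * Real.sqrt (2*T) * a / Real.sqrt Real.pi =
        10 * a * (Real.sqrt (2*T) / Real.sqrt Real.pi) := by ring
    rw [h10]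
    have hmul := mul_le_mul_of_nonneg_left hKt
      (show (0:ℝ) ≤ 10 * a * Real.exp (-1/(8*t)) by positivity)
    nlinarith [hmul]
  linarith
end

section
/- Let w_k, k ∈ ℤ, be independent standard Brownian motions on [0,t] with w_k(0) = k. For integers 2 ≤ n ≤ j, the probability that max_{k ∈ {0,…,j-n+1}} max_{s∈[0,t]} w_k(s) > j is at most (√(2t)/√π) e^{-(n-2)²/(2t)}. -/
open Real MeasureTheory Set Filter

section aux
variable {t : ℝ}

private lemma exp_form (t : ℝ) (u : ℝ) :
    Real.exp (-u ^ 2 / (2 * t)) = Real.exp (-(1 / (2 * t)) * u ^ 2) := by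
  ring_nf

private lemma int_f (ht : 0 < t) : Integrable (fun u : ℝ => Real.exp (-u ^ 2 / (2 * t))) := by
  have hb : 0 < 1 / (2 * t) := by positivity
  simpa [exp_form t] using integrable_exp_neg_mul_sq hb

private lemma int_mul (ht : 0 < t) :
    Integrable (fun u : ℝ => u * Real.exp (-u ^ 2 / (2 * t))) := by
  have hb : 0 < 1 / (2 * t) := by positivity
  simpa [exp_form t] using integrable_mul_exp_neg_mul_sq hb

private lemma int_sub (ht : 0 < t) (a : ℝ) :
    Integrable (fun u : ℝ => (u - a) * Real.exp (-u ^ 2 / (2 * t))) := by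
  have := (int_mul ht).sub ((int_f ht).const_mul a)
  refine this.congr ?_
  filter_upwards with u
  simp only [Pi.sub_apply]
  ring

/-- shifted tent integral: ∫_{Ioi a} (u-a) e^{-(u-a)^2/(2t)} du = t -/
private lemma shifted_integral (ht : 0 < t) (a : ℝ) :
    ∫ u in Ioi a, (u - a) * Real.exp (-(u - a) ^ 2 / (2 * t)) = t := by
  have hF : ∀ x ∈ Ici a, HasDerivAt (fun u : ℝ => -t * Real.exp (-(u - a) ^ 2 / (2 * t)))
      ((x - a) * Real.exp (-(x - a) ^ 2 / (2 * t))) x := by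
    intro x _
    have h1 : HasDerivAt (fun u : ℝ => -(u - a) ^ 2 / (2 * t)) (-(2 * (x - a)) / (2 * t)) x := by
      have : HasDerivAt (fun u : ℝ => (u - a)) 1 x := (hasDerivAt_id x).sub_const a
      simpa [div_eq_mul_inv, mul_comm, mul_assoc, mul_left_comm] using
        (((this.pow 2).neg).div_const (2 * t))
    have h2 := (h1.exp).const_mul (-t)
    refine h2.congr_deriv ?_
    have ht0 : t ≠ 0 := ht.ne'
    field_simp
  have hint : IntegrableOn (fun u : ℝ => (u - a) * Real.exp (-(u - a) ^ 2 / (2 * t))) (Ioi a) := by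
    have := (int_mul ht).comp_sub_right a
    exact this.integrableOn
  have hlim : Tendsto (fun u : ℝ => -t * Real.exp (-(u - a) ^ 2 / (2 * t))) atTop (nhds 0) := by
    have h1 : Tendsto (fun u : ℝ => -(u - a) ^ 2 / (2 * t)) atTop atBot := by
      apply Tendsto.atBot_div_const (by positivity)
      apply tendsto_neg_atBot_iff.mpr
      exact (tendsto_pow_atTop (by norm_num)).comp (tendsto_atTop_add_const_right _ (-a) tendsto_id)
    have := (Real.tendsto_exp_atBot.comp h1).const_mul (-t)
    simpa using this
  have := integral_Ioi_of_hasDerivAt_of_tendsto' hF hint hlim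
  rw [this]
  simp

end aux

/-- `M k` plays the role of the running maximum `max_{s ∈ [0,t]} w_k(s)` of independent
standard Brownian motions started at `k`; its tail is given by the reflection principle. -/
theorem stmt7 {Ω : Type*} [MeasurableSpace Ω] (P : Measure Ω) [IsProbabilityMeasure P]
    (t : ℝ) (ht : 0 < t) (M : ℕ → Ω → ℝ)
    (hmeas : ∀ k, Measurable (M k))
    (htail : ∀ (k : ℕ) (c : ℝ), (k : ℝ) < c →
      P {ω | c < M k ω} = ENNReal.ofReal (Real.sqrt 2 / Real.sqrt (Real.pi * t) *
        ∫ u in Set.Ioi (c - (k : ℝ)), Real.exp (-u ^ 2 / (2 * t))))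
    (n j : ℕ) (hn : 2 ≤ n) (hnj : n ≤ j) :
    P {ω | ∃ k ∈ Finset.range (j - n + 2), (j : ℝ) < M k ω} ≤
      ENNReal.ofReal (Real.sqrt (2 * t) / Real.sqrt Real.pi *
        Real.exp (-((n : ℝ) - 2) ^ 2 / (2 * t))) := by
  set f : ℝ → ℝ := fun u => Real.exp (-u ^ 2 / (2 * t)) with hf
  set H : ℝ → ℝ := fun a => ∫ u in Ioi a, (u - a) * f u with hH
  set c₀ : ℝ := Real.sqrt 2 / Real.sqrt (Real.pi * t) with hc₀
  have hc₀0 : 0 ≤ c₀ := by positivity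
  -- basic properties of H
  have hHnonneg : ∀ a : ℝ, 0 ≤ H a := by
    intro a
    apply setIntegral_nonneg measurableSet_Ioi
    intro u hu
    have : 0 ≤ u - a := by simp at hu; linarith
    positivity
  have hHbound : ∀ a : ℝ, 0 ≤ a → H a ≤ t * Real.exp (-a ^ 2 / (2 * t)) := by
    intro a ha
    have key : ∀ u ∈ Ioi a, (u - a) * f u ≤
        Real.exp (-a ^ 2 / (2 * t)) * ((u - a) * Real.exp (-(u - a) ^ 2 / (2 * t))) := by
      intro u hu
      have hua : a ≤ u := le_of_lt hu
      rw [hf]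
      have h1 : Real.exp (-u ^ 2 / (2 * t)) ≤
          Real.exp (-a ^ 2 / (2 * t)) * Real.exp (-(u - a) ^ 2 / (2 * t)) := by
        rw [← Real.exp_add]
        apply Real.exp_le_exp.mpr
        rw [← add_div, div_le_div_iff₀ (by positivity) (by positivity)]
        nlinarith [mul_nonneg ha (sub_nonneg.mpr hua)]
      calc (u - a) * Real.exp (-u ^ 2 / (2 * t))
          ≤ (u - a) * (Real.exp (-a ^ 2 / (2 * t)) * Real.exp (-(u - a) ^ 2 / (2 * t))) :=
            mul_le_mul_of_nonneg_left h1 (by linarith)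
        _ = Real.exp (-a ^ 2 / (2 * t)) * ((u - a) * Real.exp (-(u - a) ^ 2 / (2 * t))) := by ring
    have hint2 : IntegrableOn
        (fun u => Real.exp (-a ^ 2 / (2 * t)) * ((u - a) * Real.exp (-(u - a) ^ 2 / (2 * t))))
        (Ioi a) := by
      exact (((int_mul ht).comp_sub_right a).const_mul _).integrableOn
    have hmono := setIntegral_mono_on ((int_sub ht a).integrableOn) hint2 measurableSet_Ioi key
    rw [hH]
    refine hmono.trans ?_
    rw [integral_const_mul, shifted_integral ht a]
    ring_nf
    exact le_refl _
  have hstep : ∀ a : ℝ, (∫ u in Ioi (a + 1), f u) ≤ H a - H (a + 1) := by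
    intro a
    have h1 : H (a + 1) + ∫ u in Ioi (a + 1), f u ≤ H a := by
      have he : (∫ u in Ioi (a+1), (u - (a+1)) * f u) + (∫ u in Ioi (a+1), f u)
          = ∫ u in Ioi (a+1), (u - a) * f u := by
        rw [← integral_add ((int_sub ht (a+1)).integrableOn) ((int_f ht).integrableOn)]
        apply setIntegral_congr_fun measurableSet_Ioi
        intro u _
        ring
      rw [hH]
      simp only
      rw [he]
      apply setIntegral_mono_set ((int_sub ht a).integrableOn)
      · filter_upwards [ae_restrict_mem measurableSet_Ioi] with u hu
        have : a ≤ u := le_of_lt hu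
        have hf0 : 0 ≤ f u := le_of_lt (Real.exp_pos _)
        have := sub_nonneg.mpr this
        positivity
      · exact HasSubset.Subset.eventuallyLE (Ioi_subset_Ioi (by linarith))
    linarith
  -- union bound
  set N : ℕ := j - n + 2 with hN
  have hset : {ω | ∃ k ∈ Finset.range N, (j : ℝ) < M k ω}
      = ⋃ k ∈ Finset.range N, {ω | (j : ℝ) < M k ω} := by
    ext ω; simp
  rw [hset]
  refine (measure_biUnion_finset_le _ _).trans ?_
  have hkj : ∀ k ∈ Finset.range N, ((k : ℝ) : ℝ) < (j : ℝ) := by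
    intro k hk
    have : k < j := by
      simp [hN] at hk
      omega
    exact_mod_cast this
  have hterm : ∀ k ∈ Finset.range N, P {ω | (j : ℝ) < M k ω}
      = ENNReal.ofReal (c₀ * ∫ u in Ioi ((j : ℝ) - k), f u) := by
    intro k hk
    exact htail k (j : ℝ) (hkj k hk)
  rw [Finset.sum_congr rfl hterm]
  rw [← ENNReal.ofReal_sum_of_nonneg]
  swap
  · intro k _
    apply mul_nonneg hc₀0
    apply setIntegral_nonneg measurableSet_Ioi
    intro u _
    exact le_of_lt (Real.exp_pos _)
  apply ENNReal.ofReal_le_ofReal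
  -- now the real inequality
  have hsum : ∑ k ∈ Finset.range N, (∫ u in Ioi ((j : ℝ) - k), f u)
      ≤ H ((j : ℝ) - N) - H ((j : ℝ) - 0) := by
    have : ∀ k ∈ Finset.range N, (∫ u in Ioi ((j : ℝ) - k), f u)
        ≤ H ((j : ℝ) - (k + 1)) - H ((j : ℝ) - k) := by
      intro k _
      have := hstep ((j : ℝ) - (k + 1))
      have harg : (j : ℝ) - (k + 1) + 1 = (j : ℝ) - k := by push_cast; ring
      rw [harg] at this
      exact this
    refine (Finset.sum_le_sum this).trans ?_
    have htel := Finset.sum_range_sub (f := fun k : ℕ => H ((j : ℝ) - k)) (n := N)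
    simp only [Nat.cast_add, Nat.cast_one, Nat.cast_zero] at htel
    exact le_of_eq htel
  have hjN : (j : ℝ) - N = (n : ℝ) - 2 := by
    rw [hN]
    have : ((j - n + 2 : ℕ) : ℝ) = (j : ℝ) - n + 2 := by
      push_cast [Nat.cast_sub hnj]; ring
    rw [this]; ring
  have hn2 : (0 : ℝ) ≤ (n : ℝ) - 2 := by
    have : (2 : ℝ) ≤ n := by exact_mod_cast hn
    linarith
  have hsum2 : ∑ k ∈ Finset.range N, (∫ u in Ioi ((j : ℝ) - k), f u)
      ≤ t * Real.exp (-((n : ℝ) - 2) ^ 2 / (2 * t)) := by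
    refine hsum.trans ?_
    have h1 := hHnonneg ((j : ℝ) - 0)
    have h2 := hHbound ((n : ℝ) - 2) hn2
    rw [hjN]
    linarith
  have hconst : c₀ * t = Real.sqrt (2 * t) / Real.sqrt Real.pi := by
    rw [hc₀, Real.sqrt_mul (le_of_lt Real.pi_pos), Real.sqrt_mul (by norm_num : (0:ℝ) ≤ 2)]
    have hst : (0 : ℝ) < Real.sqrt t := Real.sqrt_pos.mpr ht
    have hsp : (0 : ℝ) < Real.sqrt Real.pi := Real.sqrt_pos.mpr Real.pi_pos
    have htt : Real.sqrt t * Real.sqrt t = t := Real.mul_self_sqrt (le_of_lt ht)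
    rw [div_mul_eq_mul_div, div_eq_div_iff (mul_pos hsp hst).ne' hsp.ne']
    linear_combination (-(Real.sqrt 2 * Real.sqrt Real.pi)) * htt
  calc ∑ k ∈ Finset.range N, (c₀ * ∫ u in Ioi ((j : ℝ) - k), f u)
      = c₀ * ∑ k ∈ Finset.range N, (∫ u in Ioi ((j : ℝ) - k), f u) := by
        rw [Finset.mul_sum]
    _ ≤ c₀ * (t * Real.exp (-((n : ℝ) - 2) ^ 2 / (2 * t))) :=
        mul_le_mul_of_nonneg_left hsum2 hc₀0
    _ = Real.sqrt (2 * t) / Real.sqrt Real.pi * Real.exp (-((n : ℝ) - 2) ^ 2 / (2 * t)) := by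
        rw [← mul_assoc, hconst]
end

section
/- Let p ≥ 1, t ∈ (0,T], and suppose nonnegative reals q_{k,n} (for k < n in ℤ) satisfy q_{k,n} ≤ √(r_{k-1} s_n) where r_m ≤ D e^{-(m-1-a)²/(2t)} for m ≥ a+2, r_m ≤ 1 always, s_m ≤ D e^{-(m-b)²/(2t)} for m ≥ b+1, s_m ≤ 1 always, with a < b fixed and D = 2√(2T)/√π. Then ∑_{k=0}^∞ ∑_{n=k+1}^∞ (n-k+1)^{p-1/2} q_{k,n}^{1/2} converges and is bounded by a constant depending only on p, a, b, T, uniformly in t ∈ (0,T]. -/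
open Real MeasureTheory Set

private lemma sqrt_sqrt_exp (x : ℝ) : Real.sqrt (Real.sqrt (Real.exp x)) = Real.exp (x/4) := by
  rw [← Real.exp_half, ← Real.exp_half]; ring_nf

private lemma gaussSummable (T c e : ℝ) (hT : 0 < T) :
    Summable (fun n : ℕ => ((n:ℝ)+2) ^ e * Real.exp (-(((n:ℝ)-c)^2) / (8*T))) := by
  set N : ℕ := ⌈e⌉₊ with hN
  set r : ℝ := Real.exp (-(1/(8*T))) with hr
  have hr0 : 0 < r := Real.exp_pos _
  have hr1 : r < 1 := by
    rw [hr, Real.exp_lt_one_iff]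
    have : (0:ℝ) < 1/(8*T) := by positivity
    linarith
  have hsum : Summable (fun n : ℕ => (n:ℝ)^N * r^n) :=
    summable_pow_mul_geometric_of_norm_lt_one N (by rwa [Real.norm_eq_abs, abs_of_pos hr0])
  have hsum2 : Summable (fun n : ℕ => ((n:ℝ)+2)^N * r^n) := by
    have h2 : Summable ((fun n : ℕ => (n:ℝ)^N * r^n) ∘ (fun n : ℕ => n + 2)) :=
      hsum.comp_injective (add_left_injective 2)
    have := h2.mul_left ((r^2)⁻¹)
    refine this.congr fun n => ?_
    simp only [Function.comp]
    push_cast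
    rw [pow_add]
    field_simp
  set M : ℝ := Real.exp (c/(8*T) + 1/(32*T)) with hM
  refine Summable.of_nonneg_of_le (fun n => by positivity) (fun n => ?_) (hsum2.mul_left M)
  have h1 : ((n:ℝ)+2) ^ e ≤ ((n:ℝ)+2)^N := by
    rw [← Real.rpow_natCast ((n:ℝ)+2) N]
    exact Real.rpow_le_rpow_of_exponent_le (by linarith [Nat.cast_nonneg (α := ℝ) n]) (Nat.le_ceil e)
  have h2 : Real.exp (-(((n:ℝ)-c)^2) / (8*T)) ≤ M * r^n := by
    rw [hM, hr, ← Real.exp_nat_mul, ← Real.exp_add]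
    apply Real.exp_le_exp.2
    have h8 : (0:ℝ) < 8*T := by positivity
    have heq : c/(8*T) + 1/(32*T) + (n:ℝ) * (-(1/(8*T))) = (c + 1/4 - n)/(8*T) := by
      field_simp; ring
    rw [heq]
    exact (div_le_div_iff_of_pos_right h8).mpr (by nlinarith [sq_nonneg ((n:ℝ)-c-1/2)])
  calc ((n:ℝ)+2) ^ e * Real.exp (-(((n:ℝ)-c)^2) / (8*T))
      ≤ ((n:ℝ)+2)^N * (M * r^n) := by
        apply mul_le_mul h1 h2 (by positivity) (by positivity)
    _ = M * (((n:ℝ)+2)^N * r^n) := by ring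

theorem stmt14 (p T a b : ℝ) (hp : 1 ≤ p) (hT : 0 < T) (hab : a < b) :
    ∃ K : ℝ, ∀ t ∈ Set.Ioc (0 : ℝ) T, ∀ q : ℤ → ℤ → ℝ, ∀ r s : ℤ → ℝ,
      (∀ k n : ℤ, k < n → 0 ≤ q k n ∧ q k n ≤ Real.sqrt (r (k - 1) * s n)) →
      (∀ m : ℤ, 0 ≤ r m ∧ r m ≤ 1) →
      (∀ m : ℤ, 0 ≤ s m ∧ s m ≤ 1) →
      (∀ m : ℤ, a + 2 ≤ (m : ℝ) →
        r m ≤ 2 * Real.sqrt (2 * T) / Real.sqrt Real.pi *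
          Real.exp (-((m : ℝ) - 1 - a) ^ 2 / (2 * t))) →
      (∀ m : ℤ, b + 1 ≤ (m : ℝ) →
        s m ≤ 2 * Real.sqrt (2 * T) / Real.sqrt Real.pi *
          Real.exp (-((m : ℝ) - b) ^ 2 / (2 * t))) →
      Summable (fun kj : ℕ × ℕ =>
          ((kj.2 : ℝ) + 2) ^ (p - 1 / 2) *
            Real.sqrt (q (kj.1 : ℤ) ((kj.1 : ℤ) + 1 + (kj.2 : ℤ)))) ∧
        (∑' kj : ℕ × ℕ, ((kj.2 : ℝ) + 2) ^ (p - 1 / 2) *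
          Real.sqrt (q (kj.1 : ℤ) ((kj.1 : ℤ) + 1 + (kj.2 : ℤ)))) ≤ K := by
  set D : ℝ := 2 * Real.sqrt (2 * T) / Real.sqrt Real.pi with hDdef
  have hD : 0 ≤ D := by positivity
  set C : ℝ := Real.sqrt (Real.sqrt D) with hCdef
  have hC : 0 ≤ C := Real.sqrt_nonneg _
  set h : ℕ → ℝ := fun k =>
    if a + 3 ≤ (k:ℝ) then C * Real.exp (-(((k:ℝ)-2-a)^2)/(8*T)) else 1 with hhdef
  set g : ℕ → ℝ := fun j =>
    if b ≤ (j:ℝ) then C * Real.exp (-(((j:ℝ)+1-b)^2)/(8*T)) else 1 with hgdef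
  set gg : ℕ → ℝ := fun j => ((j:ℝ)+2)^(p-1/2) * g j with hggdef
  have hh0 : ∀ k, 0 ≤ h k := by
    intro k; rw [hhdef]; dsimp only; split <;> positivity
  have hg0 : ∀ j, 0 ≤ g j := by
    intro j; rw [hgdef]; dsimp only; split <;> positivity
  have hgg0 : ∀ j, 0 ≤ gg j := fun j => mul_nonneg (by positivity) (hg0 j)
  -- summability of h
  have hhsum : Summable h := by
    set M : ℕ := ⌈a+3⌉₊ with hMdef
    rw [← summable_nat_add_iff M]
    have base := (gaussSummable T (a+2-(M:ℝ)) 0 hT).mul_left C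
    refine base.congr fun k => ?_
    have hk : a + 3 ≤ ((k+M : ℕ):ℝ) := by
      push_cast
      have := Nat.le_ceil (a+3)
      have : a + 3 ≤ (M:ℝ) := this
      linarith [Nat.cast_nonneg (α := ℝ) k]
    rw [hhdef]; dsimp only
    rw [if_pos hk]
    rw [Real.rpow_zero]
    push_cast
    ring_nf
  -- summability of gg
  have hggsum : Summable gg := by
    set M : ℕ := ⌈b⌉₊ with hMdef
    rw [← summable_nat_add_iff M]
    have base := ((gaussSummable T (b-1-(M:ℝ)) (p-1/2) hT).mul_left C).mul_left (((M:ℝ)+2)^(p-1/2))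
    refine Summable.of_nonneg_of_le (fun j => hgg0 _) (fun j => ?_) base
    have hj : b ≤ ((j+M : ℕ):ℝ) := by
      push_cast
      have : b ≤ (M:ℝ) := Nat.le_ceil b
      linarith [Nat.cast_nonneg (α := ℝ) j]
    rw [hggdef, hgdef]; dsimp only
    rw [if_pos hj]
    push_cast
    have hbase : ((j:ℝ)+(M:ℝ)+2) ^ (p-1/2) ≤ ((j:ℝ)+2)^(p-1/2) * ((M:ℝ)+2)^(p-1/2) := by
      rw [← Real.mul_rpow (by positivity) (by positivity)]
      apply Real.rpow_le_rpow (by positivity) (by nlinarith [Nat.cast_nonneg (α := ℝ) j, Nat.cast_nonneg (α := ℝ) M]) (by linarith)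
    have hexp : Real.exp (-(((j:ℝ)+(M:ℝ)+1-b)^2)/(8*T)) = Real.exp (-(((j:ℝ)-(b-1-(M:ℝ)))^2)/(8*T)) := by
      ring_nf
    calc ((j:ℝ)+(M:ℝ)+2) ^ (p-1/2) * (C * Real.exp (-(((j:ℝ)+(M:ℝ)+1-b)^2)/(8*T)))
        ≤ ((j:ℝ)+2)^(p-1/2) * ((M:ℝ)+2)^(p-1/2) * (C * Real.exp (-(((j:ℝ)+(M:ℝ)+1-b)^2)/(8*T))) := by
          apply mul_le_mul_of_nonneg_right hbase (by positivity)
      _ = ((M:ℝ)+2)^(p-1/2) * (C * (((j:ℝ)+2)^(p-1/2) * Real.exp (-(((j:ℝ)-(b-1-(M:ℝ)))^2)/(8*T)))) := by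
          rw [← hexp]; ring
  -- product summability
  have hprod : Summable (fun kj : ℕ × ℕ => h kj.1 * gg kj.2) :=
    hhsum.mul_of_nonneg hggsum (fun k => hh0 k) (fun j => hgg0 j)
  refine ⟨∑' kj : ℕ × ℕ, h kj.1 * gg kj.2, ?_⟩
  rintro t ⟨ht0, htT⟩ q r s hq hr hs hrg hsg
  -- key pointwise bound
  have key : ∀ kj : ℕ × ℕ,
      ((kj.2 : ℝ) + 2) ^ (p - 1 / 2) *
        Real.sqrt (q (kj.1 : ℤ) ((kj.1 : ℤ) + 1 + (kj.2 : ℤ))) ≤ h kj.1 * gg kj.2 := by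
    rintro ⟨k, j⟩
    dsimp only
    set n : ℤ := (k:ℤ) + 1 + (j:ℤ) with hndef
    have hkn : (k:ℤ) < n := by omega
    have hq' := hq (k:ℤ) n hkn
    have step1 : Real.sqrt (q (k:ℤ) n) ≤
        Real.sqrt (Real.sqrt (r ((k:ℤ)-1))) * Real.sqrt (Real.sqrt (s n)) := by
      calc Real.sqrt (q (k:ℤ) n) ≤ Real.sqrt (Real.sqrt (r ((k:ℤ)-1) * s n)) :=
            Real.sqrt_le_sqrt hq'.2
        _ = Real.sqrt (Real.sqrt (r ((k:ℤ)-1)) * Real.sqrt (s n)) := by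
            rw [Real.sqrt_mul (hr _).1]
        _ = Real.sqrt (Real.sqrt (r ((k:ℤ)-1))) * Real.sqrt (Real.sqrt (s n)) := by
            rw [Real.sqrt_mul (Real.sqrt_nonneg _)]
    have hAr : Real.sqrt (Real.sqrt (r ((k:ℤ)-1))) ≤ h k := by
      rw [hhdef]; dsimp only
      by_cases hk : a + 3 ≤ (k:ℝ)
      · rw [if_pos hk]
        have hrk := hrg ((k:ℤ)-1) (by push_cast; linarith)
        have hexpand : (((((k:ℤ)-1 : ℤ)):ℝ) - 1 - a) = ((k:ℝ) - 2 - a) := by push_cast; ring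
        rw [hexpand] at hrk
        calc Real.sqrt (Real.sqrt (r ((k:ℤ)-1)))
            ≤ Real.sqrt (Real.sqrt (D * Real.exp (-((k:ℝ)-2-a)^2/(2*t)))) := by
              apply Real.sqrt_le_sqrt; apply Real.sqrt_le_sqrt; exact hrk
          _ = C * Real.exp ((-((k:ℝ)-2-a)^2/(2*t))/4) := by
              rw [Real.sqrt_mul hD, Real.sqrt_mul (Real.sqrt_nonneg _), sqrt_sqrt_exp]
          _ ≤ C * Real.exp (-(((k:ℝ)-2-a)^2)/(8*T)) := by
              apply mul_le_mul_of_nonneg_left _ hC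
              apply Real.exp_le_exp.2
              have heq : (-((k:ℝ)-2-a)^2/(2*t))/4 = -(((k:ℝ)-2-a)^2)/(8*t) := by ring
              rw [heq]
              rw [neg_div, neg_div, neg_le_neg_iff]
              exact div_le_div_of_nonneg_left (sq_nonneg _) (by linarith) (by linarith)
      · rw [if_neg hk]
        exact Real.sqrt_le_one.mpr (Real.sqrt_le_one.mpr (hr _).2)
    have hAs : Real.sqrt (Real.sqrt (s n)) ≤ g j := by
      rw [hgdef]; dsimp only
      by_cases hj : b ≤ (j:ℝ)
      · rw [if_pos hj]
        have hn : b + 1 ≤ ((n:ℤ):ℝ) := by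
          rw [hndef]; push_cast; linarith [Nat.cast_nonneg (α := ℝ) k]
        have hsn := hsg n hn
        calc Real.sqrt (Real.sqrt (s n))
            ≤ Real.sqrt (Real.sqrt (D * Real.exp (-(((n:ℤ):ℝ)-b)^2/(2*t)))) := by
              apply Real.sqrt_le_sqrt; apply Real.sqrt_le_sqrt; exact hsn
          _ = C * Real.exp ((-(((n:ℤ):ℝ)-b)^2/(2*t))/4) := by
              rw [Real.sqrt_mul hD, Real.sqrt_mul (Real.sqrt_nonneg _), sqrt_sqrt_exp]
          _ ≤ C * Real.exp (-(((j:ℝ)+1-b)^2)/(8*T)) := by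
              apply mul_le_mul_of_nonneg_left _ hC
              apply Real.exp_le_exp.2
              have heq : (-(((n:ℤ):ℝ)-b)^2/(2*t))/4 = -((((n:ℤ):ℝ)-b)^2)/(8*t) := by ring
              rw [heq]
              have hsq : ((j:ℝ)+1-b)^2 ≤ (((n:ℤ):ℝ)-b)^2 := by
                have h1 : (0:ℝ) ≤ (j:ℝ)+1-b := by linarith
                have h2 : (j:ℝ)+1-b ≤ ((n:ℤ):ℝ)-b := by
                  rw [hndef]; push_cast; linarith [Nat.cast_nonneg (α := ℝ) k]
                exact pow_le_pow_left₀ h1 h2 2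
              calc -((((n:ℤ):ℝ)-b)^2)/(8*t) ≤ -(((j:ℝ)+1-b)^2)/(8*t) := by
                    rw [neg_div, neg_div, neg_le_neg_iff]
                    exact (div_le_div_iff_of_pos_right (by linarith)).mpr hsq
                _ ≤ -(((j:ℝ)+1-b)^2)/(8*T) := by
                    rw [neg_div, neg_div, neg_le_neg_iff]
                    exact div_le_div_of_nonneg_left (sq_nonneg _) (by linarith) (by linarith)
      · rw [if_neg hj]
        exact Real.sqrt_le_one.mpr (Real.sqrt_le_one.mpr (hs _).2)
    calc ((j:ℝ) + 2) ^ (p - 1 / 2) * Real.sqrt (q (k:ℤ) n)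
        ≤ ((j:ℝ) + 2) ^ (p - 1 / 2) * (h k * g j) := by
          apply mul_le_mul_of_nonneg_left _ (by positivity)
          exact step1.trans (mul_le_mul hAr hAs (Real.sqrt_nonneg _) (hh0 k))
      _ = h k * gg j := by rw [hggdef]; dsimp only; ring
  have hnn : ∀ kj : ℕ × ℕ, 0 ≤ ((kj.2 : ℝ) + 2) ^ (p - 1 / 2) *
      Real.sqrt (q (kj.1 : ℤ) ((kj.1 : ℤ) + 1 + (kj.2 : ℤ))) :=
    fun kj => mul_nonneg (by positivity) (Real.sqrt_nonneg _)
  have hS : Summable (fun kj : ℕ × ℕ =>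
      ((kj.2 : ℝ) + 2) ^ (p - 1 / 2) *
        Real.sqrt (q (kj.1 : ℤ) ((kj.1 : ℤ) + 1 + (kj.2 : ℤ)))) :=
    Summable.of_nonneg_of_le hnn key hprod
  exact ⟨hS, Summable.tsum_le_tsum key hS hprod⟩
end
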